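/- Let c ≠ 0 be a fixed real constant and for each positive integer T set ρ_T = 1 − c/T. Then, as T→∞ (along T large enough that ρ_T² ≠ 1), (1/(T²(1 − ρ_T²))) · ( T − (1 − ρ_T^{2T})/(1 − ρ_T²) ) converges to (2c − 1 + e^{−2c})/(4c²). -/

import Mathlib

open Filter Topology

/-- **Deterministic limit of the normalized second moment in the nearly non-stationary
AR(1) model.** Let `c ≠ 0` and `ρ_T = 1 - c/T`. Then, as `T → ∞`,
`(1/(T²(1 - ρ_T²))) (T - (1 - ρ_T^{2T})/(1 - ρ_T²))` converges to
`(2c - 1 + e^{-2c})/(4c²)`. -/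
theorem nearly_nonstationary_second_moment_limit
    (c : ℝ) (hc : c ≠ 0) (ρ : ℕ → ℝ) (hρ : ∀ T : ℕ, ρ T = 1 - c / T) :
    Tendsto
      (fun T : ℕ =>
        1 / ((T : ℝ) ^ 2 * (1 - ρ T ^ 2)) *
          ((T : ℝ) - (1 - ρ T ^ (2 * T)) / (1 - ρ T ^ 2)))
      Filter.atTop
      (𝓝 ((2 * c - 1 + Real.exp (-2 * c)) / (4 * c ^ 2))) := by
  set a : ℕ → ℝ := fun T => (T : ℝ) * (1 - ρ T ^ 2) with ha
  set p : ℕ → ℝ := fun T => ρ T ^ (2 * T) with hp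
  -- a tends to 2c
  have haT : Tendsto a atTop (𝓝 (2 * c)) := by
    have h1 : Tendsto (fun T : ℕ => 2 * c - c ^ 2 / T) atTop (𝓝 (2 * c - 0)) := by
      refine tendsto_const_nhds.sub ?_
      simpa using tendsto_const_div_atTop_nhds_zero_nat (c ^ 2)
    rw [sub_zero] at h1
    refine h1.congr' ?_
    filter_upwards [eventually_ne_atTop 0] with T hT
    have hT' : (T : ℝ) ≠ 0 := Nat.cast_ne_zero.mpr hT
    simp only [ha, hρ]
    field_simp
    ring
  -- p tends to exp (-2c)
  have hpT : Tendsto p atTop (𝓝 (Real.exp (-2 * c))) := by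
    have h1 : Tendsto (fun T : ℕ => ((1 + (-c) / T) ^ T) ^ 2) atTop
        (𝓝 (Real.exp (-c) ^ 2)) := (Real.tendsto_one_add_div_pow_exp (-c)).pow 2
    have h2 : Real.exp (-c) ^ 2 = Real.exp (-2 * c) := by
      rw [← Real.exp_nat_mul]; ring_nf
    rw [h2] at h1
    refine h1.congr fun T => ?_
    simp only [hp, hρ]
    rw [mul_comm 2 T, pow_mul]
    ring_nf
  have ha2 : (2 : ℝ) * c ≠ 0 := by positivity
  -- main limit in terms of a and p
  have hmain : Tendsto (fun T => 1 / a T * (1 - (1 - p T) / a T)) atTop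
      (𝓝 (1 / (2 * c) * (1 - (1 - Real.exp (-2 * c)) / (2 * c)))) := by
    exact (tendsto_const_nhds.div haT ha2).mul
      (tendsto_const_nhds.sub ((tendsto_const_nhds.sub hpT).div haT ha2))
  have hval : 1 / (2 * c) * (1 - (1 - Real.exp (-2 * c)) / (2 * c))
      = (2 * c - 1 + Real.exp (-2 * c)) / (4 * c ^ 2) := by
    field_simp
    ring
  rw [hval] at hmain
  refine hmain.congr' ?_
  filter_upwards [eventually_ne_atTop 0, haT.eventually_ne ha2] with T hT haTne
  have hT' : (T : ℝ) ≠ 0 := Nat.cast_ne_zero.mpr hT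
  have h1ρ : 1 - ρ T ^ 2 ≠ 0 := by
    intro h
    apply haTne
    simp [ha, h]
  have : (T : ℝ) ^ 2 * (1 - ρ T ^ 2) = (T : ℝ) * a T := by simp [ha]; ring
  rw [this]
  have haval : a T = (T : ℝ) * (1 - ρ T ^ 2) := rfl
  field_simp
  ring_nf
  rw [show p T = ρ T ^ (T * 2) by rw [mul_comm], haval]
  ring
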